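/- Let Riem : Fin 4 → Fin 4 → Fin 4 → Fin 4 → ℝ and let G : Matrix (Fin 4) (Fin 4) ℝ be symmetric with det G < 0. Define the quadratic (Kretschmann) gravity Lagrangian density L̃(Riem, G) = −(1/4) ∑_{ξ,η,ρ,α,σ,λ} Riem ξ η ρ α · Riem η ξ σ λ · G ρ σ · G α λ · (−det G)^{−1/2}. Then for all μ, ν ∈ Fin 4: (i) ∑_{ξ,β,λ} (∂L̃/∂Riem_{(ν,ξ,β,λ)}) · Riem μ ξ β λ = ∑_{η,β,λ} (∂L̃/∂Riem_{(η,μ,β,λ)}) · Riem η ν β λ (the first-index and second-index replacement terms cancel in the tensor identity), and (ii) the metric energy-momentum tensor density equals the canonical one: ∑_{β} (∂L̃/∂G_{(ν,β)}) · G μ β + ∑_{β} (∂L̃/∂G_{(β,ν)}) · G β μ = ∑_{η,ξ,λ} (∂L̃/∂Riem_{(η,ξ,μ,λ)}) · Riem η ξ ν λ + ∑_{η,ξ,β} (∂L̃/∂Riem_{(η,ξ,β,μ)}) · Riem η ξ β ν − (if μ = ν then L̃(Riem,G) else 0). In particular the canonical energy-momentum tensor of the Riemann-tensor-squared Lagrangian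 is symmetric. -/

import Mathlib

attribute [local instance] Matrix.normedAddCommGroup Matrix.normedSpace

noncomputable abbrev X4 := (Fin 4 → Fin 4 → Fin 4 → Fin 4 → ℝ) × Matrix (Fin 4) (Fin 4) ℝ

lemma fderiv_dir {f : X4 → ℝ} {p v : X4} {d : ℝ}
    (hf : DifferentiableAt ℝ f p)
    (hd : HasDerivAt (fun t : ℝ => f (p + t • v)) d 0) :
    fderiv ℝ f p v = d := by
  have hline : HasDerivAt (fun t : ℝ => p + t • v) v 0 := by
    have := ((hasDerivAt_id (0:ℝ)).smul_const v).const_add p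
    rw [one_smul] at this; exact this
  have hf' : HasFDerivAt f (fderiv ℝ f p) (p + (0:ℝ) • v) := by
    simpa using hf.hasFDerivAt
  exact (hf'.comp_hasDerivAt 0 hline).unique hd

noncomputable def c1 (a b c d : Fin 4) : X4 →L[ℝ] ℝ where
  toFun := fun x => x.1 a b c d
  map_add' := fun _ _ => rfl
  map_smul' := fun _ _ => rfl
  cont := by
    have h1 : Continuous fun x : X4 => x.1 := continuous_fst
    have h2 : Continuous fun f : Fin 4 → Fin 4 → Fin 4 → Fin 4 → ℝ => f a b c d :=
      ((continuous_apply d).comp ((continuous_apply c).comp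
        ((continuous_apply b).comp (continuous_apply a))))
    exact h2.comp h1

noncomputable def c2 (i j : Fin 4) : X4 →L[ℝ] ℝ where
  toFun := fun x => x.2 i j
  map_add' := fun _ _ => rfl
  map_smul' := fun _ _ => rfl
  cont := by exact continuous_snd.matrix_elem i j

lemma diff_c1 (a b c d : Fin 4) (p : X4) :
    DifferentiableAt ℝ (fun x : X4 => x.1 a b c d) p := by
  have := (c1 a b c d).differentiableAt (x := p); exact this

lemma diff_c2 (i j : Fin 4) (p : X4) :
    DifferentiableAt ℝ (fun x : X4 => x.2 i j) p := by
  have := (c2 i j).differentiableAt (x := p); exact this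

lemma diff_det (p : X4) : DifferentiableAt ℝ (fun x : X4 => x.2.det) p := by
  have h : (fun x : X4 => x.2.det) = fun x : X4 =>
      ∑ σ : Equiv.Perm (Fin 4), ((Equiv.Perm.sign σ : ℤ) : ℝ) * ∏ i, x.2 (σ i) i := by
    funext x; rw [Matrix.det_apply']
  rw [h]
  apply DifferentiableAt.fun_sum
  intro σ _
  apply DifferentiableAt.const_mul
  have h2 : (fun x : X4 => ∏ i, x.2 (σ i) i)
      = fun x : X4 => x.2 (σ 0) 0 * x.2 (σ 1) 1 * x.2 (σ 2) 2 * x.2 (σ 3) 3 := by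
    funext x; rw [Fin.prod_univ_four]
  rw [h2]
  exact (((diff_c2 _ _ p).mul (diff_c2 _ _ p)).mul (diff_c2 _ _ p)).mul (diff_c2 _ _ p)

lemma diff_L (L : X4 → ℝ)
    (hL : L = fun x =>
      -(1 / 4) * (∑ ξ, ∑ η, ∑ ρ, ∑ α, ∑ σ, ∑ l,
          x.1 ξ η ρ α * x.1 η ξ σ l * x.2 ρ σ * x.2 α l)
        * (-x.2.det) ^ (-(1 / 2) : ℝ)) (p : X4) (hdet : p.2.det < 0) :
    DifferentiableAt ℝ L p := by
  subst hL
  have hdiffA : DifferentiableAt ℝ (fun x : X4 =>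
      -(1 / 4 : ℝ) * (∑ ξ, ∑ η, ∑ ρ, ∑ α, ∑ σ, ∑ l,
        x.1 ξ η ρ α * x.1 η ξ σ l * x.2 ρ σ * x.2 α l)) p := by
    apply DifferentiableAt.const_mul
    apply DifferentiableAt.fun_sum; intro ξ _
    apply DifferentiableAt.fun_sum; intro η _
    apply DifferentiableAt.fun_sum; intro ρ _
    apply DifferentiableAt.fun_sum; intro α _
    apply DifferentiableAt.fun_sum; intro σ _
    apply DifferentiableAt.fun_sum; intro l _
    exact (((diff_c1 _ _ _ _ p).mul (diff_c1 _ _ _ _ p)).mul (diff_c2 _ _ p)).mul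
      (diff_c2 _ _ p)
  have hdiffB : DifferentiableAt ℝ (fun x : X4 => (-x.2.det) ^ (-(1 / 2) : ℝ)) p := by
    apply DifferentiableAt.rpow_const ((diff_det p).neg)
    left; simp only [Pi.neg_apply, neg_ne_zero]; exact ne_of_lt hdet
  exact hdiffA.mul hdiffB

lemma det_line (G : Matrix (Fin 4) (Fin 4) ℝ) (i j : Fin 4) (t : ℝ) :
    (G + t • Matrix.single i j 1).det = G.det + t * G.adjugate j i := by
  have h : G + t • Matrix.single i j 1
      = G.updateRow i (G i + t • (Pi.single j 1 : Fin 4 → ℝ)) := by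
    ext a b
    by_cases hai : a = i
    · subst hai
      simp [Matrix.updateRow_self, Matrix.single, Matrix.add_apply, Pi.single_apply,
        eq_comm]
    · simp only [Matrix.add_apply, Matrix.smul_apply, Matrix.updateRow_ne hai,
        Matrix.single, Matrix.of_apply, smul_eq_mul]
      have : ¬(i = a ∧ j = b) := fun hc => hai hc.1.symm
      rw [if_neg this]; ring
  rw [h, Matrix.det_updateRow_add, Matrix.updateRow_eq_self, Matrix.det_updateRow_smul,
    Matrix.adjugate_apply]

lemma dir1 (Riem : Fin 4 → Fin 4 → Fin 4 → Fin 4 → ℝ) (G : Matrix (Fin 4) (Fin 4) ℝ)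
    (hdet : G.det < 0) (L : X4 → ℝ)
    (hL : L = fun x =>
      -(1 / 4) * (∑ ξ, ∑ η, ∑ ρ, ∑ α, ∑ σ, ∑ l,
          x.1 ξ η ρ α * x.1 η ξ σ l * x.2 ρ σ * x.2 α l)
        * (-x.2.det) ^ (-(1 / 2) : ℝ)) (h1 : Fin 4 → Fin 4 → Fin 4 → Fin 4 → ℝ) :
    fderiv ℝ L (Riem, G) (h1, 0) =
      -(1 / 4) * (∑ ξ, ∑ η, ∑ ρ, ∑ α, ∑ σ, ∑ l,
          (h1 ξ η ρ α * Riem η ξ σ l + Riem ξ η ρ α * h1 η ξ σ l) * G ρ σ * G α l)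
        * (-G.det) ^ (-(1 / 2) : ℝ) := by
  apply fderiv_dir (diff_L L hL (Riem, G) hdet)
  have hfun : (fun t : ℝ => L ((Riem, G) + t • (h1, 0)))
      = fun t : ℝ => -(1 / 4) * (∑ ξ, ∑ η, ∑ ρ, ∑ α, ∑ σ, ∑ l,
          (Riem ξ η ρ α + t * h1 ξ η ρ α) * (Riem η ξ σ l + t * h1 η ξ σ l)
            * G ρ σ * G α l) * (-G.det) ^ (-(1 / 2) : ℝ) := by
    subst hL; funext t
    simp [Prod.smul_mk, Prod.mk_add_mk, smul_zero, add_zero, Pi.add_apply, Pi.smul_apply,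
      smul_eq_mul]
  rw [hfun]
  apply HasDerivAt.mul_const
  apply HasDerivAt.const_mul
  apply HasDerivAt.fun_sum; intro ξ _
  apply HasDerivAt.fun_sum; intro η _
  apply HasDerivAt.fun_sum; intro ρ _
  apply HasDerivAt.fun_sum; intro α _
  apply HasDerivAt.fun_sum; intro σ _
  apply HasDerivAt.fun_sum; intro l _
  have ha : HasDerivAt (fun t : ℝ => Riem ξ η ρ α + t * h1 ξ η ρ α) (h1 ξ η ρ α) 0 := by
    simpa using ((hasDerivAt_id (0:ℝ)).mul_const (h1 ξ η ρ α)).const_add (Riem ξ η ρ α)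
  have hb : HasDerivAt (fun t : ℝ => Riem η ξ σ l + t * h1 η ξ σ l) (h1 η ξ σ l) 0 := by
    simpa using ((hasDerivAt_id (0:ℝ)).mul_const (h1 η ξ σ l)).const_add (Riem η ξ σ l)
  have h := ((ha.fun_mul hb).mul_const (G ρ σ)).mul_const (G α l)
  exact h.congr_deriv (by ring)


lemma dir2 (Riem : Fin 4 → Fin 4 → Fin 4 → Fin 4 → ℝ) (G : Matrix (Fin 4) (Fin 4) ℝ)
    (hdet : G.det < 0) (L : X4 → ℝ)
    (hL : L = fun x =>
      -(1 / 4) * (∑ ξ, ∑ η, ∑ ρ, ∑ α, ∑ σ, ∑ l,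
          x.1 ξ η ρ α * x.1 η ξ σ l * x.2 ρ σ * x.2 α l)
        * (-x.2.det) ^ (-(1 / 2) : ℝ)) (i j : Fin 4) :
    fderiv ℝ L (Riem, G) (0, Matrix.single i j 1) =
      -(1 / 4) * (∑ ξ, ∑ η, ∑ ρ, ∑ α, ∑ σ, ∑ l,
          Riem ξ η ρ α * Riem η ξ σ l *
            (Matrix.single i j (1:ℝ) ρ σ * G α l
              + G ρ σ * Matrix.single i j (1:ℝ) α l))
        * (-G.det) ^ (-(1 / 2) : ℝ)
      + (-(1 / 4) * (∑ ξ, ∑ η, ∑ ρ, ∑ α, ∑ σ, ∑ l,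
          Riem ξ η ρ α * Riem η ξ σ l * G ρ σ * G α l))
        * ((-(1 / 2) : ℝ) * (-G.det) ^ ((-(1 / 2) : ℝ) - 1) * (-(G.adjugate j i))) := by
  apply fderiv_dir (diff_L L hL (Riem, G) hdet)
  have hfun : (fun t : ℝ => L ((Riem, G) + t • (0, Matrix.single i j 1)))
      = fun t : ℝ => -(1 / 4) * (∑ ξ, ∑ η, ∑ ρ, ∑ α, ∑ σ, ∑ l,
          Riem ξ η ρ α * Riem η ξ σ l
            * (G ρ σ + t * Matrix.single i j (1:ℝ) ρ σ)
            * (G α l + t * Matrix.single i j (1:ℝ) α l))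
          * (-(G.det + t * G.adjugate j i)) ^ (-(1 / 2) : ℝ) := by
    subst hL; funext t
    have hd := det_line G i j t
    simp only [Prod.smul_mk, Prod.mk_add_mk, smul_zero, add_zero, Pi.add_apply, Pi.smul_apply,
      smul_eq_mul, Matrix.add_apply, Matrix.smul_apply, hd]
  rw [hfun]
  have hB : HasDerivAt (fun t : ℝ => (-(G.det + t * G.adjugate j i)) ^ (-(1 / 2) : ℝ))
      ((-(1 / 2) : ℝ) * (-G.det) ^ ((-(1 / 2) : ℝ) - 1) * (-(G.adjugate j i))) 0 := by
    have hinner : HasDerivAt (fun t : ℝ => -(G.det + t * G.adjugate j i))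
        (-(G.adjugate j i)) 0 := by
      exact ((hasDerivAt_mul_const (G.adjugate j i)).const_add G.det).neg
    have hne : (-G.det) ≠ 0 := by simp only [neg_ne_zero]; exact ne_of_lt hdet
    have hrpow : HasDerivAt (fun x : ℝ => x ^ (-(1 / 2) : ℝ))
        ((-(1 / 2) : ℝ) * (-G.det) ^ ((-(1 / 2) : ℝ) - 1)) (-G.det) :=
      Real.hasDerivAt_rpow_const (Or.inl hne)
    have hrpow' : HasDerivAt (fun x : ℝ => x ^ (-(1 / 2) : ℝ))
        ((-(1 / 2) : ℝ) * (-G.det) ^ ((-(1 / 2) : ℝ) - 1)) (-(G.det + 0 * G.adjugate j i)) := by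
      convert hrpow using 2; ring
    exact hrpow'.comp 0 hinner
  have hS : HasDerivAt (fun t : ℝ => (∑ ξ, ∑ η, ∑ ρ, ∑ α, ∑ σ, ∑ l,
      Riem ξ η ρ α * Riem η ξ σ l
        * (G ρ σ + t * Matrix.single i j (1:ℝ) ρ σ)
        * (G α l + t * Matrix.single i j (1:ℝ) α l)))
      (∑ ξ, ∑ η, ∑ ρ, ∑ α, ∑ σ, ∑ l,
        Riem ξ η ρ α * Riem η ξ σ l *
          (Matrix.single i j (1:ℝ) ρ σ * G α l
            + G ρ σ * Matrix.single i j (1:ℝ) α l)) 0 := by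
    apply HasDerivAt.fun_sum; intro ξ _
    apply HasDerivAt.fun_sum; intro η _
    apply HasDerivAt.fun_sum; intro ρ _
    apply HasDerivAt.fun_sum; intro α _
    apply HasDerivAt.fun_sum; intro σ _
    apply HasDerivAt.fun_sum; intro l _
    have ha : HasDerivAt (fun t : ℝ => G ρ σ + t * Matrix.single i j (1:ℝ) ρ σ)
        (Matrix.single i j (1:ℝ) ρ σ) 0 := by
      simpa using ((hasDerivAt_id (0:ℝ)).mul_const
        (Matrix.single i j (1:ℝ) ρ σ)).const_add (G ρ σ)
    have hb : HasDerivAt (fun t : ℝ => G α l + t * Matrix.single i j (1:ℝ) α l)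
        (Matrix.single i j (1:ℝ) α l) 0 := by
      simpa using ((hasDerivAt_id (0:ℝ)).mul_const
        (Matrix.single i j (1:ℝ) α l)).const_add (G α l)
    have h := ((ha.const_mul (Riem ξ η ρ α * Riem η ξ σ l)).fun_mul hb)
    exact h.congr_deriv (by ring)
  have hfinal := (hS.const_mul (-(1 / 4) : ℝ)).fun_mul hB
  exact hfinal.congr_deriv (by simp only [zero_mul, mul_zero, add_zero])

abbrev F5 := Fin 4 × Fin 4 × Fin 4 × Fin 4 × Fin 4

lemma sum5 (F : Fin 4 → Fin 4 → Fin 4 → Fin 4 → Fin 4 → ℝ) :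
    (∑ a, ∑ b, ∑ c, ∑ d, ∑ e, F a b c d e)
      = ∑ z : F5, F z.1 z.2.1 z.2.2.1 z.2.2.2.1 z.2.2.2.2 := by
  simp [Fintype.sum_prod_type]

/-- for quadratic gravity with the Riemann tensor squared
(Kretschmann scalar, Eqs. (24a)–(24d)): (i) the first-index and second-index
replacement terms of the tensor identity cancel, and (ii) the metric
energy-momentum tensor density equals the canonical one. -/
theorem kretschmann_emt_identity
    (Riem : Fin 4 → Fin 4 → Fin 4 → Fin 4 → ℝ)
    (G : Matrix (Fin 4) (Fin 4) ℝ) (hG : G.IsSymm) (hdet : G.det < 0)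
    (L : (Fin 4 → Fin 4 → Fin 4 → Fin 4 → ℝ) × Matrix (Fin 4) (Fin 4) ℝ → ℝ)
    (hL : L = fun x =>
      -(1 / 4) * (∑ ξ, ∑ η, ∑ ρ, ∑ α, ∑ σ, ∑ l,
          x.1 ξ η ρ α * x.1 η ξ σ l * x.2 ρ σ * x.2 α l)
        * (-x.2.det) ^ (-(1 / 2) : ℝ)) :
    ∀ μ ν : Fin 4,
      ((∑ ξ, ∑ β, ∑ l, fderiv ℝ L (Riem, G)
          ((fun a b c d => if a = ν ∧ b = ξ ∧ c = β ∧ d = l then 1 else 0), 0)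
          * Riem μ ξ β l)
        = (∑ η, ∑ β, ∑ l, fderiv ℝ L (Riem, G)
          ((fun a b c d => if a = η ∧ b = μ ∧ c = β ∧ d = l then 1 else 0), 0)
          * Riem η ν β l)) ∧
      ((∑ β, fderiv ℝ L (Riem, G) (0, Matrix.single ν β 1) * G μ β)
        + (∑ β, fderiv ℝ L (Riem, G) (0, Matrix.single β ν 1) * G β μ)
        = (∑ η, ∑ ξ, ∑ l, fderiv ℝ L (Riem, G)
            ((fun a b c d => if a = η ∧ b = ξ ∧ c = μ ∧ d = l then 1 else 0), 0)
            * Riem η ξ ν l)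
          + (∑ η, ∑ ξ, ∑ β, fderiv ℝ L (Riem, G)
            ((fun a b c d => if a = η ∧ b = ξ ∧ c = β ∧ d = μ then 1 else 0), 0)
            * Riem η ξ β ν)
          - (if μ = ν then L (Riem, G) else 0)) := by
  intro μ ν
  have hsym : ∀ a b, G a b = G b a := fun a b => hG.apply b a
  have hne : (-G.det) ≠ 0 := by simp only [neg_ne_zero]; exact ne_of_lt hdet
  have hLval : L (Riem, G) = -(1 / 4) * (∑ ξ, ∑ η, ∑ ρ, ∑ α, ∑ σ, ∑ l, Riem ξ η ρ α * Riem η ξ σ l * G ρ σ * G α l) * (-G.det) ^ (-(1 / 2) : ℝ) := by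
    simp only [hL]
  -- collapsed Riemann-direction derivative
  have hcol : ∀ a₀ b₀ c₀ d₀ : Fin 4,
      fderiv ℝ L (Riem, G)
        ((fun a b c d => if a = a₀ ∧ b = b₀ ∧ c = c₀ ∧ d = d₀ then 1 else 0), 0)
      = -(1 / 2) * (∑ σ, ∑ lam, Riem b₀ a₀ σ lam * G c₀ σ * G d₀ lam) * (-G.det) ^ (-(1 / 2) : ℝ) := by
    intro a₀ b₀ c₀ d₀
    rw [dir1 Riem G hdet L hL]
    have hbig : (∑ ξ, ∑ η, ∑ ρ, ∑ α, ∑ σ, ∑ l,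
        ((if ξ = a₀ ∧ η = b₀ ∧ ρ = c₀ ∧ α = d₀ then (1:ℝ) else 0) * Riem η ξ σ l
          + Riem ξ η ρ α * (if η = a₀ ∧ ξ = b₀ ∧ σ = c₀ ∧ l = d₀ then (1:ℝ) else 0))
          * G ρ σ * G α l)
      = (∑ σ, ∑ lam, Riem b₀ a₀ σ lam * G c₀ σ * G d₀ lam)
        + (∑ ρ, ∑ α, Riem b₀ a₀ ρ α * G ρ c₀ * G α d₀) := by
      simp [add_mul, Finset.sum_add_distrib, ite_and, boole_mul, mul_ite, ite_mul, zero_mul,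
        mul_zero, mul_one, one_mul, Finset.sum_ite_eq, Finset.sum_ite_eq', Finset.mem_univ]
    rw [hbig]
    have hflip : (∑ ρ, ∑ α, Riem b₀ a₀ ρ α * G ρ c₀ * G α d₀)
        = (∑ σ, ∑ lam, Riem b₀ a₀ σ lam * G c₀ σ * G d₀ lam) :=
      Finset.sum_congr rfl fun ρ _ => Finset.sum_congr rfl fun α _ => by
        rw [hsym ρ c₀, hsym α d₀]
    rw [hflip]; ring
  -- collapsed metric-direction derivative
  have hcol2 : ∀ i j : Fin 4,
      fderiv ℝ L (Riem, G) (0, Matrix.single i j 1)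
      = -(1 / 4) * ((∑ ξ, ∑ η, ∑ α, ∑ l, Riem ξ η i α * Riem η ξ j l * G α l)
          + (∑ ξ, ∑ η, ∑ ρ, ∑ σ, Riem ξ η ρ i * Riem η ξ σ j * G ρ σ)) * (-G.det) ^ (-(1 / 2) : ℝ)
        + -(1 / 8) * (∑ ξ, ∑ η, ∑ ρ, ∑ α, ∑ σ, ∑ l, Riem ξ η ρ α * Riem η ξ σ l * G ρ σ * G α l) * (-G.det) ^ ((-(1 / 2) : ℝ) - 1) * G.adjugate j i := by
    intro i j
    rw [dir2 Riem G hdet L hL i j]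
    have hbig : (∑ ξ, ∑ η, ∑ ρ, ∑ α, ∑ σ, ∑ l,
        Riem ξ η ρ α * Riem η ξ σ l *
          (Matrix.single i j (1:ℝ) ρ σ * G α l
            + G ρ σ * Matrix.single i j (1:ℝ) α l))
      = (∑ ξ, ∑ η, ∑ α, ∑ l, Riem ξ η i α * Riem η ξ j l * G α l)
        + (∑ ξ, ∑ η, ∑ ρ, ∑ σ, Riem ξ η ρ i * Riem η ξ σ j * G ρ σ) := by
      simp [Matrix.single, Matrix.of_apply, mul_add, Finset.sum_add_distrib, ite_and,
        mul_ite, ite_mul, zero_mul, mul_zero, mul_one, one_mul,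
        Finset.sum_ite_eq, Finset.sum_ite_eq', Finset.mem_univ]
    rw [hbig]
    ring
  refine ⟨?_, ?_⟩
  · -- part (i)
    simp only [hcol]
    trans (∑ ξ, ∑ β, ∑ l, ∑ σ, ∑ lam,
        -(1 / 2) * (Riem ξ ν σ lam * G β σ * G l lam * Riem μ ξ β l) * (-G.det) ^ (-(1 / 2) : ℝ))
    · refine Finset.sum_congr rfl fun ξ _ => Finset.sum_congr rfl fun β _ =>
        Finset.sum_congr rfl fun l _ => ?_
      simp only [← Finset.sum_mul, ← Finset.mul_sum]
      ring
    trans (∑ η, ∑ β, ∑ l, ∑ σ, ∑ lam,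
        -(1 / 2) * (Riem μ η σ lam * G β σ * G l lam * Riem η ν β l) * (-G.det) ^ (-(1 / 2) : ℝ))
    · rw [sum5 (fun ξ β l σ lam =>
          -(1 / 2) * (Riem ξ ν σ lam * G β σ * G l lam * Riem μ ξ β l) * (-G.det) ^ (-(1 / 2) : ℝ)),
        sum5 (fun η β l σ lam =>
          -(1 / 2) * (Riem μ η σ lam * G β σ * G l lam * Riem η ν β l) * (-G.det) ^ (-(1 / 2) : ℝ))]
      refine Fintype.sum_equiv
        ⟨fun z => (z.1, z.2.2.2.1, z.2.2.2.2, z.2.1, z.2.2.1),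
         fun z => (z.1, z.2.2.2.1, z.2.2.2.2, z.2.1, z.2.2.1),
         fun _ => rfl, fun _ => rfl⟩ _ _ ?_
      rintro ⟨a, b, c, d, e⟩
      simp only [Equiv.coe_fn_mk]
      rw [hsym b d, hsym c e]
      ring
    · refine Finset.sum_congr rfl fun η _ => Finset.sum_congr rfl fun β _ =>
        Finset.sum_congr rfl fun l _ => ?_
      simp only [← Finset.sum_mul, ← Finset.mul_sum]
      ring
  · -- part (ii)
    have hpow : (-G.det) ^ ((-(1 / 2) : ℝ) - 1) * G.det = -((-G.det) ^ (-(1 / 2) : ℝ)) := by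
      have h1 : (-G.det) ^ (-(1 / 2) : ℝ) = (-G.det) ^ ((-(1 / 2) : ℝ) - 1) * (-G.det) := by
        rw [← Real.rpow_add_one hne]
        norm_num
      linear_combination h1
    have hGA1 : (∑ β, G.adjugate β ν * G μ β) = G.det * (if μ = ν then (1:ℝ) else 0) := by
      have h2 : (G * G.adjugate) μ ν = G.det * (if μ = ν then (1:ℝ) else 0) := by
        rw [Matrix.mul_adjugate]
        simp [Matrix.smul_apply, Matrix.one_apply]
      rw [← h2, Matrix.mul_apply]
      exact Finset.sum_congr rfl fun β _ => mul_comm _ _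
    have hGA2 : (∑ β, G.adjugate ν β * G β μ) = G.det * (if μ = ν then (1:ℝ) else 0) := by
      have h2 : (G.adjugate * G) ν μ = G.det * (if μ = ν then (1:ℝ) else 0) := by
        rw [Matrix.adjugate_mul]
        by_cases hc : μ = ν
        · simp [hc]
        · simp [Matrix.smul_apply, Matrix.one_apply, hc,
            show ¬ν = μ from fun h => hc h.symm]
      rw [← h2, Matrix.mul_apply]
    have hite : (if μ = ν then L (Riem, G) else 0)
        = -(1 / 4) * (∑ ξ, ∑ η, ∑ ρ, ∑ α, ∑ σ, ∑ l, Riem ξ η ρ α * Riem η ξ σ l * G ρ σ * G α l) * (-G.det) ^ (-(1 / 2) : ℝ) * (if μ = ν then (1:ℝ) else 0) := by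
      rw [hLval]
      by_cases hc : μ = ν <;> simp [hc]
    have M1 : (∑ β, ∑ ξ, ∑ η, ∑ α, ∑ l, Riem ξ η ν α * Riem η ξ β l * G α l * G μ β) = (∑ η, ∑ ξ, ∑ l, ∑ σ, ∑ lam, Riem ξ η σ lam * G μ σ * G l lam * Riem η ξ ν l) := by
      rw [sum5 (fun β ξ η α l => Riem ξ η ν α * Riem η ξ β l * G α l * G μ β),
        sum5 (fun η ξ l σ lam => Riem ξ η σ lam * G μ σ * G l lam * Riem η ξ ν l)]
      refine Fintype.sum_equiv
        ⟨fun z => (z.2.1, z.2.2.1, z.2.2.2.1, z.1, z.2.2.2.2),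
         fun z => (z.2.2.2.1, z.1, z.2.1, z.2.2.1, z.2.2.2.2),
         fun _ => rfl, fun _ => rfl⟩ _ _ ?_
      rintro ⟨a, b, c, d, e⟩
      simp only [Equiv.coe_fn_mk]
      ring
    have M2 : (∑ β, ∑ ξ, ∑ η, ∑ ρ, ∑ σ, Riem ξ η ρ ν * Riem η ξ σ β * G ρ σ * G μ β) = (∑ η, ∑ ξ, ∑ β, ∑ σ, ∑ lam, Riem ξ η σ lam * G β σ * G μ lam * Riem η ξ β ν) := by
      rw [sum5 (fun β ξ η ρ σ => Riem ξ η ρ ν * Riem η ξ σ β * G ρ σ * G μ β),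
        sum5 (fun η ξ β σ lam => Riem ξ η σ lam * G β σ * G μ lam * Riem η ξ β ν)]
      refine Fintype.sum_equiv
        ⟨fun z => (z.2.1, z.2.2.1, z.2.2.2.1, z.2.2.2.2, z.1),
         fun z => (z.2.2.2.2, z.1, z.2.1, z.2.2.1, z.2.2.2.1),
         fun _ => rfl, fun _ => rfl⟩ _ _ ?_
      rintro ⟨a, b, c, d, e⟩
      simp only [Equiv.coe_fn_mk]
      ring
    have M3 : (∑ β, ∑ ξ, ∑ η, ∑ α, ∑ l, Riem ξ η β α * Riem η ξ ν l * G α l * G β μ) = (∑ η, ∑ ξ, ∑ l, ∑ σ, ∑ lam, Riem ξ η σ lam * G μ σ * G l lam * Riem η ξ ν l) := by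
      rw [sum5 (fun β ξ η α l => Riem ξ η β α * Riem η ξ ν l * G α l * G β μ),
        sum5 (fun η ξ l σ lam => Riem ξ η σ lam * G μ σ * G l lam * Riem η ξ ν l)]
      refine Fintype.sum_equiv
        ⟨fun z => (z.2.2.1, z.2.1, z.2.2.2.2, z.1, z.2.2.2.1),
         fun z => (z.2.2.2.1, z.2.1, z.1, z.2.2.2.2, z.2.2.1),
         fun _ => rfl, fun _ => rfl⟩ _ _ ?_
      rintro ⟨a, b, c, d, e⟩
      simp only [Equiv.coe_fn_mk]
      rw [hsym d e, hsym a μ]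
      ring
    have M4 : (∑ β, ∑ ξ, ∑ η, ∑ ρ, ∑ σ, Riem ξ η ρ β * Riem η ξ σ ν * G ρ σ * G β μ) = (∑ η, ∑ ξ, ∑ β, ∑ σ, ∑ lam, Riem ξ η σ lam * G β σ * G μ lam * Riem η ξ β ν) := by
      rw [sum5 (fun β ξ η ρ σ => Riem ξ η ρ β * Riem η ξ σ ν * G ρ σ * G β μ),
        sum5 (fun η ξ β σ lam => Riem ξ η σ lam * G β σ * G μ lam * Riem η ξ β ν)]
      refine Fintype.sum_equiv
        ⟨fun z => (z.2.2.1, z.2.1, z.2.2.2.2, z.2.2.2.1, z.1),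
         fun z => (z.2.2.2.2, z.2.1, z.1, z.2.2.2.1, z.2.2.1),
         fun _ => rfl, fun _ => rfl⟩ _ _ ?_
      rintro ⟨a, b, c, d, e⟩
      simp only [Equiv.coe_fn_mk]
      rw [hsym d e, hsym a μ]
      ring
    simp only [hcol, hcol2]
    rw [hite]
    trans (-(1 / 4) * (-G.det) ^ (-(1 / 2) : ℝ) * (∑ β, ∑ ξ, ∑ η, ∑ α, ∑ l, Riem ξ η ν α * Riem η ξ β l * G α l * G μ β) + -(1 / 4) * (-G.det) ^ (-(1 / 2) : ℝ) * (∑ β, ∑ ξ, ∑ η, ∑ ρ, ∑ σ, Riem ξ η ρ ν * Riem η ξ σ β * G ρ σ * G μ β)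
        + -(1 / 8) * (∑ ξ, ∑ η, ∑ ρ, ∑ α, ∑ σ, ∑ l, Riem ξ η ρ α * Riem η ξ σ l * G ρ σ * G α l) * (-G.det) ^ ((-(1 / 2) : ℝ) - 1) * (G.det * (if μ = ν then (1:ℝ) else 0))
        + (-(1 / 4) * (-G.det) ^ (-(1 / 2) : ℝ) * (∑ β, ∑ ξ, ∑ η, ∑ α, ∑ l, Riem ξ η β α * Riem η ξ ν l * G α l * G β μ) + -(1 / 4) * (-G.det) ^ (-(1 / 2) : ℝ) * (∑ β, ∑ ξ, ∑ η, ∑ ρ, ∑ σ, Riem ξ η ρ β * Riem η ξ σ ν * G ρ σ * G β μ)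
          + -(1 / 8) * (∑ ξ, ∑ η, ∑ ρ, ∑ α, ∑ σ, ∑ l, Riem ξ η ρ α * Riem η ξ σ l * G ρ σ * G α l) * (-G.det) ^ ((-(1 / 2) : ℝ) - 1) * (G.det * (if μ = ν then (1:ℝ) else 0))))
    · congr 1
      · trans (∑ β, (-(1 / 4) * (-G.det) ^ (-(1 / 2) : ℝ) * (∑ ξ, ∑ η, ∑ α, ∑ l,
              Riem ξ η ν α * Riem η ξ β l * G α l * G μ β)
            + -(1 / 4) * (-G.det) ^ (-(1 / 2) : ℝ) * (∑ ξ, ∑ η, ∑ ρ, ∑ σ,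
              Riem ξ η ρ ν * Riem η ξ σ β * G ρ σ * G μ β)
            + -(1 / 8) * (∑ ξ, ∑ η, ∑ ρ, ∑ α, ∑ σ, ∑ l, Riem ξ η ρ α * Riem η ξ σ l * G ρ σ * G α l) * (-G.det) ^ ((-(1 / 2) : ℝ) - 1) * (G.adjugate β ν * G μ β)))
        · refine Finset.sum_congr rfl fun β _ => ?_
          simp only [← Finset.sum_mul, ← Finset.mul_sum]
          ring
        · rw [Finset.sum_add_distrib, Finset.sum_add_distrib]
          simp only [← Finset.mul_sum]
          rw [hGA1]
      · trans (∑ β, (-(1 / 4) * (-G.det) ^ (-(1 / 2) : ℝ) * (∑ ξ, ∑ η, ∑ α, ∑ l,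
              Riem ξ η β α * Riem η ξ ν l * G α l * G β μ)
            + -(1 / 4) * (-G.det) ^ (-(1 / 2) : ℝ) * (∑ ξ, ∑ η, ∑ ρ, ∑ σ,
              Riem ξ η ρ β * Riem η ξ σ ν * G ρ σ * G β μ)
            + -(1 / 8) * (∑ ξ, ∑ η, ∑ ρ, ∑ α, ∑ σ, ∑ l, Riem ξ η ρ α * Riem η ξ σ l * G ρ σ * G α l) * (-G.det) ^ ((-(1 / 2) : ℝ) - 1) * (G.adjugate ν β * G β μ)))
        · refine Finset.sum_congr rfl fun β _ => ?_
          simp only [← Finset.sum_mul, ← Finset.mul_sum]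
          ring
        · rw [Finset.sum_add_distrib, Finset.sum_add_distrib]
          simp only [← Finset.mul_sum]
          rw [hGA2]
    trans (-(1 / 2) * (-G.det) ^ (-(1 / 2) : ℝ) * (∑ η, ∑ ξ, ∑ l, ∑ σ, ∑ lam, Riem ξ η σ lam * G μ σ * G l lam * Riem η ξ ν l) + -(1 / 2) * (-G.det) ^ (-(1 / 2) : ℝ) * (∑ η, ∑ ξ, ∑ β, ∑ σ, ∑ lam, Riem ξ η σ lam * G β σ * G μ lam * Riem η ξ β ν)
        - -(1 / 4) * (∑ ξ, ∑ η, ∑ ρ, ∑ α, ∑ σ, ∑ l, Riem ξ η ρ α * Riem η ξ σ l * G ρ σ * G α l) * (-G.det) ^ (-(1 / 2) : ℝ) * (if μ = ν then (1:ℝ) else 0))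
    · rw [M1, M2, M3, M4]
      linear_combination (-(1 / 4) * (∑ ξ, ∑ η, ∑ ρ, ∑ α, ∑ σ, ∑ l, Riem ξ η ρ α * Riem η ξ σ l * G ρ σ * G α l) * (if μ = ν then (1:ℝ) else 0)) * hpow
    · congr 1
      · congr 1
        · trans (∑ η, ∑ ξ, ∑ l, -(1 / 2) * (-G.det) ^ (-(1 / 2) : ℝ) * (∑ σ, ∑ lam,
              Riem ξ η σ lam * G μ σ * G l lam * Riem η ξ ν l))
          · simp only [← Finset.mul_sum]
          · refine Finset.sum_congr rfl fun η _ => Finset.sum_congr rfl fun ξ _ =>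
              Finset.sum_congr rfl fun l _ => ?_
            simp only [← Finset.sum_mul, ← Finset.mul_sum]
            ring
        · trans (∑ η, ∑ ξ, ∑ β, -(1 / 2) * (-G.det) ^ (-(1 / 2) : ℝ) * (∑ σ, ∑ lam,
              Riem ξ η σ lam * G β σ * G μ lam * Riem η ξ β ν))
          · simp only [← Finset.mul_sum]
          · refine Finset.sum_congr rfl fun η _ => Finset.sum_congr rfl fun ξ _ =>
              Finset.sum_congr rfl fun β _ => ?_
            simp only [← Finset.sum_mul, ← Finset.mul_sum]
            ring
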